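/- Let A be a real symmetric d×d matrix with orthonormal eigenvectors u_1, ..., u_d and eigenvalues λ_1 ≥ λ_2 ≥ ... ≥ λ_d, and suppose λ_1 − λ_2 ≥ G for some G > 0. Let c ∈ (0, 1/32), let w be a unit vector with ⟨w, u_1⟩ ≥ 0, set λ = wᵀAw, and suppose λ_1 − λ ≤ 16cG. Then (1/2)λ_1 − (1/2) wᵀ A w ≥ (G/4) ‖w − u_1‖². -/

import Mathlib

open scoped RealInnerProductSpace

/-- **strong convexity near the top eigenvector.** Let `T` be a
symmetric operator on `ℝ^d` with orthonormal eigenvectors `u i`, eigenvalues `lam i`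
in nonincreasing order, and eigengap `lam 0 − lam 1 ≥ G > 0`. Let `c ∈ (0, 1/32)`,
let `w` be a unit vector with `⟨w, u 0⟩ ≥ 0`, and set `λ = ⟨w, T w⟩`. If
`lam 0 − λ ≤ 16cG`, then `(1/2)·lam 0 − (1/2)⟨w, T w⟩ ≥ (G/4)‖w − u 0‖²`. -/
theorem stmt_12 {d : ℕ} (hd : 2 ≤ d)
    (T : EuclideanSpace ℝ (Fin d) →ₗ[ℝ] EuclideanSpace ℝ (Fin d))
    (hT : T.IsSymmetric)
    (u : Fin d → EuclideanSpace ℝ (Fin d)) (hu : Orthonormal ℝ u)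
    (lam : Fin d → ℝ) (heig : ∀ i, T (u i) = lam i • u i) (hmono : Antitone lam)
    (G : ℝ) (hG : 0 < G)
    (hgap : lam ⟨0, by omega⟩ - lam ⟨1, by omega⟩ ≥ G)
    (c : ℝ) (hc : 0 < c) (hc' : c < 1 / 32)
    (w : EuclideanSpace ℝ (Fin d)) (hw : ‖w‖ = 1)
    (hpos : ⟪w, u ⟨0, by omega⟩⟫ ≥ 0)
    (hclose : lam ⟨0, by omega⟩ - ⟪w, T w⟫ ≤ 16 * c * G) :
    (1 / 2) * lam ⟨0, by omega⟩ - (1 / 2) * ⟪w, T w⟫ ≥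
      (G / 4) * ‖w - u ⟨0, by omega⟩‖ ^ 2 := by
  haveI : Nonempty (Fin d) := ⟨⟨0, by omega⟩⟩
  set i0 : Fin d := ⟨0, by omega⟩
  set i1 : Fin d := ⟨1, by omega⟩
  have hcard : Fintype.card (Fin d) = Module.finrank ℝ (EuclideanSpace ℝ (Fin d)) := by
    simp
  let bb := basisOfOrthonormalOfCardEqFinrank hu hcard
  have hbb : (bb : Fin d → EuclideanSpace ℝ (Fin d)) = u :=
    coe_basisOfOrthonormalOfCardEqFinrank hu hcard
  have hub : Orthonormal ℝ (bb : Fin d → EuclideanSpace ℝ (Fin d)) := by rw [hbb]; exact hu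
  let b : OrthonormalBasis (Fin d) ℝ (EuclideanSpace ℝ (Fin d)) := bb.toOrthonormalBasis hub
  have hb : ∀ i, b i = u i := by
    have h : (⇑b : Fin d → EuclideanSpace ℝ (Fin d)) = ⇑bb := Module.Basis.coe_toOrthonormalBasis bb hub
    intro i
    rw [congrFun h i, congrFun hbb i]
  set a : Fin d → ℝ := fun i => ⟪w, u i⟫
  have key : ⟪w, T w⟫ = ∑ i, lam i * a i ^ 2 := by
    have h1 : ∑ i, ⟪w, b i⟫ * ⟪b i, T w⟫ = ⟪w, T w⟫ := b.sum_inner_mul_inner w (T w)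
    rw [← h1]
    apply Finset.sum_congr rfl
    intro i _
    have : ⟪b i, T w⟫ = lam i * ⟪w, u i⟫ := by
      rw [hb, ← hT (u i) w, heig, inner_smul_left, real_inner_comm]
      simp
    rw [this, hb]
    ring
  have hnorm1 : ∑ i, a i ^ 2 = 1 := by
    have h1 : ∑ i, ⟪w, b i⟫ * ⟪b i, w⟫ = ⟪w, w⟫ := b.sum_inner_mul_inner w w
    have h2 : ⟪w, w⟫ = 1 := by
      rw [real_inner_self_eq_norm_sq, hw]; norm_num
    rw [← h2, ← h1]
    apply Finset.sum_congr rfl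
    intro i _
    rw [hb]
    rw [real_inner_comm w (u i)]
    ring
  have ha0le : a i0 ≤ 1 := by
    have := real_inner_le_norm w (u i0)
    rw [hw, hu.1 i0] at this
    simpa [a] using this
  have ha0 : 0 ≤ a i0 := hpos
  -- gap bound: lam i0 - ⟪w,Tw⟫ ≥ G * (1 - a i0 ^ 2)
  have hgapbd : lam i0 - ⟪w, T w⟫ ≥ G * (1 - a i0 ^ 2) := by
    have e1 : lam i0 - ⟪w, T w⟫ = ∑ i, (lam i0 - lam i) * a i ^ 2 := by
      have h : ∑ i, (lam i0 - lam i) * a i ^ 2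
          = lam i0 * ∑ i, a i ^ 2 - ∑ i, lam i * a i ^ 2 := by
        rw [Finset.mul_sum, ← Finset.sum_sub_distrib]
        exact Finset.sum_congr rfl fun i _ => by ring
      rw [key, h, hnorm1]; ring
    rw [e1]
    have e2 : G * (1 - a i0 ^ 2) = ∑ i ∈ Finset.univ \ {i0}, G * a i ^ 2 := by
      rw [← Finset.mul_sum]
      congr 1
      have h2 := Finset.sum_sdiff_eq_sub (f := fun i => a i ^ 2) (Finset.subset_univ {i0})
      rw [h2, ← hnorm1]
      simp
    rw [e2]
    have : ∑ i, (lam i0 - lam i) * a i ^ 2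
        = ∑ i ∈ Finset.univ \ {i0}, (lam i0 - lam i) * a i ^ 2 := by
      rw [Finset.sum_sdiff_eq_sub (f := fun i => (lam i0 - lam i) * a i ^ 2)
        (Finset.subset_univ {i0})]
      simp
    rw [this]
    apply Finset.sum_le_sum
    intro i hi
    have hi' : i ≠ i0 := by simpa using hi
    have h1le : i1 ≤ i := by
      rw [Fin.le_def]
      have : (i : ℕ) ≠ 0 := fun h => hi' (Fin.ext h)
      simpa [i1] using Nat.one_le_iff_ne_zero.2 this
    have : lam i ≤ lam i1 := hmono h1le
    have : lam i0 - lam i ≥ G := by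
      have := hmono h1le
      simp only [i0, i1] at *
      linarith [hgap]
    nlinarith [sq_nonneg (a i)]
  have hnsq : ‖w - u i0‖ ^ 2 = 2 - 2 * a i0 := by
    rw [norm_sub_sq_real, hw, hu.1 i0]
    simp only [a]
    ring
  rw [hnsq]
  nlinarith [hgapbd, mul_nonneg hG.le (mul_nonneg ha0 (by linarith : (0:ℝ) ≤ 1 - a i0))]
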